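/- Let h ∈ ℝ[x,y,z] and let X_ℝ = {v ∈ ℝ³ : h(v) = 0}. For r > 0 define the critical set C_r = {p ∈ E_r ∩ X_ℝ : q attains a maximum on E_r ∩ X_ℝ at p or q attains a minimum on E_r ∩ X_ℝ at p} (IsMaxOn or IsMinOn for q on E_r ∩ X_ℝ). Then q tends to L at O along X_ℝ if and only if for every ε > 0 there exists δ > 0 such that for every r with 0 < r < δ and every p ∈ C_r, |q(p) − L| < ε. -/
import Mathlib
set_option maxHeartbeats 1000000


open MvPolynomial Filter Topology

/-- The quotient `q(v) = f(v)/g(v)`, with the convention `q(v) = 0` when `g(v) = 0`. -/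
noncomputable def quotFun (f g : MvPolynomial (Fin 3) ℝ) (v : EuclideanSpace ℝ (Fin 3)) : ℝ :=
  eval v f / eval v g

/-- The ellipsoid `Ax² + By² + Cz² = r²`. -/
def ellipsoid (A B C r : ℝ) : Set (EuclideanSpace ℝ (Fin 3)) :=
  {v | A * (v 0) ^ 2 + B * (v 1) ^ 2 + C * (v 2) ^ 2 = r ^ 2}

lemma myNormSq (v : EuclideanSpace ℝ (Fin 3)) :
    ‖v‖ ^ 2 = (v 0) ^ 2 + (v 1) ^ 2 + (v 2) ^ 2 := by
  rw [EuclideanSpace.norm_eq, Real.sq_sqrt (by positivity)]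
  simp [Fin.sum_univ_three, Real.norm_eq_abs, sq_abs]

lemma myEvalCont (p : MvPolynomial (Fin 3) ℝ) :
    Continuous fun v : EuclideanSpace ℝ (Fin 3) => eval v p :=
  (MvPolynomial.continuous_eval (p := p)).comp (PiLp.continuous_ofLp 2 fun _ : Fin 3 => ℝ)

lemma myCoordCont (i : Fin 3) :
    Continuous fun v : EuclideanSpace ℝ (Fin 3) => v i :=
  (continuous_apply i).comp (PiLp.continuous_ofLp 2 fun _ : Fin 3 => ℝ)

lemma myNeZero {v : EuclideanSpace ℝ (Fin 3)} (hv : v ≠ 0) :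
    0 < (v 0) ^ 2 + (v 1) ^ 2 + (v 2) ^ 2 := by
  rw [← myNormSq]
  have : 0 < ‖v‖ := norm_pos_iff.mpr hv
  positivity

lemma myEllNeZero {A B C r : ℝ} (hr : 0 < r) {v : EuclideanSpace ℝ (Fin 3)}
    (hv : v ∈ ellipsoid A B C r) : v ≠ 0 := by
  intro h0
  rw [h0] at hv
  simp only [ellipsoid, Set.mem_setOf_eq] at hv
  have h1 : (0 : EuclideanSpace ℝ (Fin 3)) 0 = 0 := rfl
  have h2 : (0 : EuclideanSpace ℝ (Fin 3)) 1 = 0 := rfl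
  have h3 : (0 : EuclideanSpace ℝ (Fin 3)) 2 = 0 := rfl
  rw [h1, h2, h3] at hv
  nlinarith


/-- `q` tends to `L` at the origin along the real surface `X_ℝ = {h = 0}` iff for every
`ε > 0` there is `δ > 0` such that `|q(p) − L| < ε` for every point `p` of the critical set
`C_r` (extrema of `q` on `E_r ∩ X_ℝ`) with `0 < r < δ`. -/
theorem limit_along_surface_iff_critical_sets (f g : MvPolynomial (Fin 3) ℝ)
    (hg : ∃ ε > 0, ∀ v ∈ Metric.ball (0 : EuclideanSpace ℝ (Fin 3)) ε, eval v g = 0 → v = 0)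
    (A B C : ℝ) (hA : 0 < A) (hB : 0 < B) (hC : 0 < C)
    (h : MvPolynomial (Fin 3) ℝ) (L : ℝ) :
    Tendsto (quotFun f g)
        (𝓝[{v : EuclideanSpace ℝ (Fin 3) | eval v h = 0} \ {0}] 0) (𝓝 L) ↔
      ∀ ε > 0, ∃ δ > 0, ∀ r : ℝ, 0 < r → r < δ →
        ∀ p ∈ ellipsoid A B C r ∩ {v : EuclideanSpace ℝ (Fin 3) | eval v h = 0},
          (IsMaxOn (quotFun f g)
              (ellipsoid A B C r ∩ {v : EuclideanSpace ℝ (Fin 3) | eval v h = 0}) p ∨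
           IsMinOn (quotFun f g)
              (ellipsoid A B C r ∩ {v : EuclideanSpace ℝ (Fin 3) | eval v h = 0}) p) →
          |quotFun f g p - L| < ε := by
  have hm0 : 0 < min A (min B C) := lt_min hA (lt_min hB hC)
  set m := min A (min B C) with hmdef
  constructor
  · -- forward
    intro ht ε hε
    rw [Metric.tendsto_nhdsWithin_nhds] at ht
    obtain ⟨δ', hδ', H⟩ := ht ε hε
    refine ⟨δ' * Real.sqrt m, by positivity, ?_⟩
    intro r hr hrδ p hp _
    obtain ⟨hpe, hph⟩ := hp
    have hp0 : p ≠ 0 := myEllNeZero hr hpe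
    have hpe' : A * (p 0) ^ 2 + B * (p 1) ^ 2 + C * (p 2) ^ 2 = r ^ 2 := hpe
    have hmb : m * ‖p‖ ^ 2 ≤ r ^ 2 := by
      rw [myNormSq]
      have h1 : m ≤ A := min_le_left _ _
      have h2 : m ≤ B := le_trans (min_le_right _ _) (min_le_left _ _)
      have h3 : m ≤ C := le_trans (min_le_right _ _) (min_le_right _ _)
      nlinarith [sq_nonneg (p 0), sq_nonneg (p 1), sq_nonneg (p 2)]
    have hsqm : Real.sqrt m ^ 2 = m := Real.sq_sqrt hm0.le
    have hlt : ‖p‖ ^ 2 < δ' ^ 2 := by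
      have : r ^ 2 < (δ' * Real.sqrt m) ^ 2 := by
        apply pow_lt_pow_left₀ hrδ hr.le; norm_num
      nlinarith
    have hnp : ‖p‖ < δ' := lt_of_pow_lt_pow_left₀ 2 hδ'.le hlt
    have := H (x := p) (by simp [Set.mem_diff, hph, hp0]) (by rwa [dist_zero_right])
    rwa [Real.dist_eq] at this
  · -- backward
    intro H
    rw [Metric.tendsto_nhdsWithin_nhds]
    intro ε hε
    obtain ⟨δ, hδ, Hδ⟩ := H ε hε
    obtain ⟨εg, hεg, Hg⟩ := hg
    have hM0 : 0 < max A (max B C) := lt_of_lt_of_le hA (le_max_left _ _)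
    set M := max A (max B C) with hMdef
    refine ⟨min (δ / Real.sqrt M) (εg * Real.sqrt m / Real.sqrt M), by positivity, ?_⟩
    intro v hv hvd
    obtain ⟨hvh, hv0⟩ := hv
    have hv0' : v ≠ 0 := hv0
    have hsum : 0 < A * (v 0) ^ 2 + B * (v 1) ^ 2 + C * (v 2) ^ 2 := by
      have h0 := myNeZero hv0'
      have h1 : m ≤ A := min_le_left _ _
      have h2 : m ≤ B := le_trans (min_le_right _ _) (min_le_left _ _)
      have h3 : m ≤ C := le_trans (min_le_right _ _) (min_le_right _ _)
      nlinarith [sq_nonneg (v 0), sq_nonneg (v 1), sq_nonneg (v 2), mul_pos hm0 h0]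
    obtain ⟨r, hr, hr2⟩ : ∃ r : ℝ, 0 < r ∧
        r ^ 2 = A * (v 0) ^ 2 + B * (v 1) ^ 2 + C * (v 2) ^ 2 :=
      ⟨Real.sqrt _, Real.sqrt_pos.mpr hsum, Real.sq_sqrt hsum.le⟩
    have hvE : v ∈ ellipsoid A B C r := hr2.symm
    have hsqm : Real.sqrt m ^ 2 = m := Real.sq_sqrt hm0.le
    have hsqM : Real.sqrt M ^ 2 = M := Real.sq_sqrt hM0.le
    have hsqM0 : 0 < Real.sqrt M := Real.sqrt_pos.mpr hM0
    have hnv : ‖v‖ = dist v 0 := (dist_zero_right v).symm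
    have hrle : r ^ 2 ≤ M * ‖v‖ ^ 2 := by
      rw [hr2, myNormSq]
      have h1 : A ≤ M := le_max_left _ _
      have h2 : B ≤ M := le_trans (le_max_left _ _) (le_max_right _ _)
      have h3 : C ≤ M := le_trans (le_max_right _ _) (le_max_right _ _)
      nlinarith [sq_nonneg (v 0), sq_nonneg (v 1), sq_nonneg (v 2)]
    have hv1 : ‖v‖ < δ / Real.sqrt M := by
      rw [hnv]; exact lt_of_lt_of_le hvd (min_le_left _ _)
    have hv2 : ‖v‖ < εg * Real.sqrt m / Real.sqrt M := by
      rw [hnv]; exact lt_of_lt_of_le hvd (min_le_right _ _)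
    have hrδ : r < δ := by
      have h1 : r ^ 2 < δ ^ 2 := by
        have : M * ‖v‖ ^ 2 < M * (δ / Real.sqrt M) ^ 2 := by
          apply mul_lt_mul_of_pos_left _ hM0
          exact pow_lt_pow_left₀ hv1 (norm_nonneg v) (by norm_num)
        have hδ2 : M * (δ / Real.sqrt M) ^ 2 = δ ^ 2 := by
          rw [div_pow, hsqM, mul_div_cancel₀ _ hM0.ne']
        linarith
      exact lt_of_pow_lt_pow_left₀ 2 hδ.le h1
    have hrεg : r ^ 2 < εg ^ 2 * m := by
      have : M * ‖v‖ ^ 2 < M * (εg * Real.sqrt m / Real.sqrt M) ^ 2 := by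
        apply mul_lt_mul_of_pos_left _ hM0
        exact pow_lt_pow_left₀ hv2 (norm_nonneg v) (by norm_num)
      have heq : M * (εg * Real.sqrt m / Real.sqrt M) ^ 2 = εg ^ 2 * m := by
        rw [div_pow, mul_pow, hsqm, hsqM, mul_div_cancel₀ _ hM0.ne']
      linarith
    -- every point of K is in ball εg and nonzero, so g ≠ 0 there
    set K := ellipsoid A B C r ∩ {v : EuclideanSpace ℝ (Fin 3) | eval v h = 0} with hK
    have hKball : ∀ x ∈ K, ‖x‖ < εg := by
      intro x hx
      have hxe : A * (x 0) ^ 2 + B * (x 1) ^ 2 + C * (x 2) ^ 2 = r ^ 2 := hx.1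
      have hmb : m * ‖x‖ ^ 2 ≤ r ^ 2 := by
        rw [myNormSq]
        have h1 : m ≤ A := min_le_left _ _
        have h2 : m ≤ B := le_trans (min_le_right _ _) (min_le_left _ _)
        have h3 : m ≤ C := le_trans (min_le_right _ _) (min_le_right _ _)
        nlinarith [sq_nonneg (x 0), sq_nonneg (x 1), sq_nonneg (x 2)]
      have : ‖x‖ ^ 2 < εg ^ 2 := by nlinarith
      exact lt_of_pow_lt_pow_left₀ 2 hεg.le this
    have hKg : ∀ x ∈ K, eval x g ≠ 0 := by
      intro x hx hgx
      have hx0 : x ≠ 0 := myEllNeZero hr hx.1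
      exact hx0 (Hg x (by rw [Metric.mem_ball, dist_zero_right]; exact hKball x hx) hgx)
    -- K compact
    have hKcl : IsClosed K := by
      apply IsClosed.inter
      · have : ellipsoid A B C r =
            (fun v : EuclideanSpace ℝ (Fin 3) =>
              A * (v 0) ^ 2 + B * (v 1) ^ 2 + C * (v 2) ^ 2) ⁻¹' {r ^ 2} := rfl
        rw [this]
        exact IsClosed.preimage
          (((continuous_const.mul ((myCoordCont 0).pow 2)).add
            (continuous_const.mul ((myCoordCont 1).pow 2))).add
            (continuous_const.mul ((myCoordCont 2).pow 2))) isClosed_singleton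
      · exact IsClosed.preimage (myEvalCont h) isClosed_singleton
    have hKbd : Bornology.IsBounded K := by
      apply Bornology.IsBounded.subset (Metric.isBounded_closedBall (x := (0 : EuclideanSpace ℝ (Fin 3))) (r := εg))
      intro x hx
      rw [Metric.mem_closedBall, dist_zero_right]
      exact (hKball x hx).le
    have hKcp : IsCompact K := Metric.isCompact_of_isClosed_isBounded hKcl hKbd
    have hKne : K.Nonempty := ⟨v, hvE, hvh⟩
    have hKcont : ContinuousOn (quotFun f g) K := by
      intro x hx
      exact (ContinuousAt.div (myEvalCont f).continuousAt (myEvalCont g).continuousAt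
        (hKg x hx)).continuousWithinAt
    obtain ⟨p1, hp1K, hp1⟩ := hKcp.exists_isMaxOn hKne hKcont
    obtain ⟨p2, hp2K, hp2⟩ := hKcp.exists_isMinOn hKne hKcont
    have hb1 := Hδ r hr hrδ p1 hp1K (Or.inl hp1)
    have hb2 := Hδ r hr hrδ p2 hp2K (Or.inr hp2)
    have hv1' : quotFun f g v ≤ quotFun f g p1 := hp1 ⟨hvE, hvh⟩
    have hv2' : quotFun f g p2 ≤ quotFun f g v := hp2 ⟨hvE, hvh⟩
    rw [Real.dist_eq, abs_lt]
    rw [abs_lt] at hb1 hb2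
    constructor <;> linarith [hb1.1, hb1.2, hb2.1, hb2.2]
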